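/- Let r ≥ 2 and let E be a finite set with |E| ≥ r. Let H be a family of r-element subsets of E such that |H₁ ∩ H₂| ≤ r - 2 for all distinct H₁, H₂ ∈ H, and H is not the full family of r-element subsets. Then the family of all r-element subsets of E not in H forms the set of bases of a matroid of rank r on E. -/

import Mathlib

/-- If `H` is a family of `r`-element subsets of a finite set `E` (`r ≥ 2`,
`|E| ≥ r`), any two distinct members of `H` intersect in at most `r - 2` elements, and
`H` is not the full family of `r`-subsets, then the `r`-subsets not in `H` form the
bases of a matroid of rank `r` on `E`. -/
theorem stmt_16 {α : Type*} [Fintype α] (r : ℕ) (hr : 2 ≤ r)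
    (hcard : r ≤ Fintype.card α)
    (H : Set (Set α)) (hHr : ∀ S ∈ H, S.ncard = r)
    (hint : ∀ S₁ ∈ H, ∀ S₂ ∈ H, S₁ ≠ S₂ → (S₁ ∩ S₂).ncard ≤ r - 2)
    (hne : ∃ B : Set α, B.ncard = r ∧ B ∉ H) :
    ∃ M : Matroid α, M.E = Set.univ ∧ ∀ B, M.IsBase B ↔ (B.ncard = r ∧ B ∉ H) := by
  have hexch : Matroid.ExchangeProperty (fun B : Set α => B.ncard = r ∧ B ∉ H) := by
    rintro X Y ⟨hXr, hXH⟩ ⟨hYr, hYH⟩ a ha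
    have hXfin : X.Finite := Set.toFinite X
    have hYfin : Y.Finite := Set.toFinite Y
    have haX : a ∈ X := ha.1
    -- ncard of X \ {a} is r - 1
    have hXa : (X \ {a}).ncard = r - 1 := by
      rw [Set.ncard_diff_singleton_of_mem haX, hXr]
    have hdiff : (X \ Y).ncard = (Y \ X).ncard := by
      have h1 : (X \ Y).ncard + (X ∩ Y).ncard = r := by
        rw [← hXr, ← Set.ncard_inter_add_ncard_diff_eq_ncard X Y hXfin]; ring
      have h2 : (Y \ X).ncard + (X ∩ Y).ncard = r := by
        rw [← hYr, ← Set.ncard_inter_add_ncard_diff_eq_ncard Y X hYfin, Set.inter_comm]; ring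
      omega
    have hXYne : (X \ Y).Nonempty := ⟨a, ha⟩
    have hXYpos : 0 < (X \ Y).ncard := (Set.ncard_pos (Set.toFinite _)).mpr hXYne
    -- helper: for any b ∈ Y \ X, insert b (X \ {a}) has ncard r
    have hins : ∀ b ∈ Y \ X, (insert b (X \ {a})).ncard = r := by
      intro b hb
      rw [Set.ncard_insert_of_notMem (by simp [hb.2]) ((hXfin.diff (t := {a})))]
      omega
    by_cases h1 : (X \ Y).ncard = 1
    · -- then X \ Y = {a}, Y \ X = {b}, and insert b (X \ {a}) = Y
      have hXY : X \ Y = {a} := by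
        have := Set.ncard_eq_one.mp h1
        obtain ⟨c, hc⟩ := this
        rw [hc] at ha ⊢
        simp_all
      have hYX1 : (Y \ X).ncard = 1 := by omega
      obtain ⟨b, hb⟩ := Set.ncard_eq_one.mp hYX1
      refine ⟨b, by rw [hb]; exact rfl, ?_⟩
      have hbY : b ∈ Y \ X := by rw [hb]; exact rfl
      have : insert b (X \ {a}) = Y := by
        ext x
        constructor
        · rintro (rfl | ⟨hx1, hx2⟩)
          · exact hbY.1
          · by_contra hxY
            have : x ∈ X \ Y := ⟨hx1, hxY⟩
            rw [hXY] at this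
            exact hx2 this
        · intro hx
          by_cases hxX : x ∈ X
          · right
            refine ⟨hxX, ?_⟩
            intro hxa
            simp only [Set.mem_singleton_iff] at hxa
            subst hxa
            exact (ha.2 hx)
          · left
            have : x ∈ Y \ X := ⟨hx, hxX⟩
            rw [hb] at this
            exact this
      rw [this]
      exact ⟨hYr, hYH⟩
    · -- |Y \ X| ≥ 2 : pick two distinct elements
      have h2 : 2 ≤ (Y \ X).ncard := by omega
      obtain ⟨b₁, b₂, hb₁, hb₂, hbne⟩ :=
        (Set.one_lt_ncard_iff (Set.toFinite _)).mp (by omega : 1 < (Y \ X).ncard)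
      by_cases hB1 : insert b₁ (X \ {a}) ∈ H
      · refine ⟨b₂, hb₂, hins b₂ hb₂, ?_⟩
        intro hB2
        have hne12 : insert b₁ (X \ {a}) ≠ insert b₂ (X \ {a}) := by
          intro he
          have : b₁ ∈ insert b₂ (X \ {a}) := he ▸ Set.mem_insert _ _
          rcases this with h | h
          · exact hbne h
          · exact hb₁.2 h.1
        have hsub : X \ {a} ⊆ insert b₁ (X \ {a}) ∩ insert b₂ (X \ {a}) := fun x hx =>
          ⟨Set.mem_insert_of_mem _ hx, Set.mem_insert_of_mem _ hx⟩
        have hge : r - 1 ≤ (insert b₁ (X \ {a}) ∩ insert b₂ (X \ {a})).ncard := by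
          rw [← hXa]
          exact Set.ncard_le_ncard hsub (Set.toFinite _)
        have := hint _ hB1 _ hB2 hne12
        omega
      · exact ⟨b₁, hb₁, hins b₁ hb₁, hB1⟩
  refine ⟨Matroid.ofIsBaseOfFinite Set.finite_univ (fun B => B.ncard = r ∧ B ∉ H) hne hexch
    (fun B _ => Set.subset_univ B), rfl, fun B => ?_⟩
  simp [Matroid.ofIsBaseOfFinite_isBase]
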